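/- Under Assumption A_f(ρ̲) and P(ρ̲), and for λ > 0, for every θ : S×A → ℝ: V*_λ(ρ) − V_θ(ρ) ≤ (λ·ω_f/(1−γ))·∑_{s∈S} ‖ζ_θ(s)‖₂². -/

import Mathlib

open Finset Filter MeasureTheory

noncomputable section

/-- A probability distribution on a finite set. -/
def IsProbDist {A : Type*} [Fintype A] (ν : A → ℝ) : Prop :=
  (∀ a, 0 ≤ ν a) ∧ ∑ a, ν a = 1

/-- The f-divergence between two distributions on a finite set. -/
def fDiv {A : Type*} [Fintype A] (f : ℝ → ℝ) (ν q : A → ℝ) : ℝ :=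
  ∑ a, q a * f (ν a / q a)

/-- `ν` is the (unique) maximizer of `⟨·,x⟩ - D_f(·‖q)` over probability distributions. -/
def IsSoftargmax {A : Type*} [Fintype A] (f : ℝ → ℝ) (q x ν : A → ℝ) : Prop :=
  IsProbDist ν ∧
  (∀ m : A → ℝ, IsProbDist m →
    (∑ a, m a * x a) - fDiv f m q ≤ (∑ a, ν a * x a) - fDiv f ν q) ∧
  (∀ m : A → ℝ, IsProbDist m →
    (∑ a, m a * x a) - fDiv f m q = (∑ a, ν a * x a) - fDiv f ν q → m = ν)

/-- Assumption A_f(ρ̲) on the divergence generator `f`, with constants `ωf`, `κf`, `ιf`: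
(i) boundedness, strict convexity, `f 1 = 0`, three-times differentiability;
(ii) `f' → -∞` at `0⁺` and `|f'/f''|` bounded near `0⁺`;
(iii) `1/(u f'' u) ≤ ωf` and `|f''' u / (f'' u)²| ≤ κf` on `(0, 1/ρ̲]`;
(iv) `f''` decreasing on `(0, ιf]` and dominated by `f'' ιf` on `[ιf, 1/ρ̲]`. -/
def AF (f : ℝ → ℝ) (ρb ωf κf ιf : ℝ) : Prop :=
  (∃ C : ℝ, ∀ u ∈ Set.Icc (0:ℝ) (1/ρb), |f u| ≤ C) ∧
  StrictConvexOn ℝ (Set.Icc (0:ℝ) (1/ρb)) f ∧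
  f 1 = 0 ∧
  (∀ u ∈ Set.Ioo (0:ℝ) (1/ρb),
    DifferentiableAt ℝ f u ∧ DifferentiableAt ℝ (deriv f) u ∧
      DifferentiableAt ℝ (deriv (deriv f)) u) ∧
  Tendsto (deriv f) (nhdsWithin 0 (Set.Ioi 0)) atBot ∧
  (∃ M : ℝ, ∀ᶠ u in nhdsWithin (0:ℝ) (Set.Ioi 0), |deriv f u / deriv (deriv f) u| ≤ M) ∧
  1 ≤ ωf ∧ 0 < κf ∧
  (∀ u ∈ Set.Ioc (0:ℝ) (1/ρb),
    1 / (u * deriv (deriv f) u) ≤ ωf ∧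
      |deriv (deriv (deriv f)) u / (deriv (deriv f) u) ^ 2| ≤ κf) ∧
  (0 < ιf ∧ ιf ≤ 1) ∧
  (∀ u v : ℝ, 0 < u → u ≤ v → v ≤ ιf → deriv (deriv f) v ≤ deriv (deriv f) u) ∧
  (∀ u : ℝ, ιf ≤ u → u ≤ 1/ρb → deriv (deriv f) u ≤ deriv (deriv f) ιf)

/-- A policy: a probability distribution over actions for each state. -/
def IsPolicy {S A : Type*} [Fintype A] (π : S → A → ℝ) : Prop := ∀ s, IsProbDist (π s)

/-- `V` is the f-regularized value function of `π` (Bellman fixed point). -/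
def IsRegValue {S A : Type*} [Fintype S] [Fintype A] (P : S → A → S → ℝ) (r : S → A → ℝ)
    (γ lam : ℝ) (f : ℝ → ℝ) (pref : S → A → ℝ) (π : S → A → ℝ) (V : S → ℝ) : Prop :=
  ∀ s, V s = (∑ a, π s a * r s a) - lam * fDiv f (π s) (pref s)
      + γ * ∑ a, π s a * ∑ s', P s a s' * V s'

/-- `Vstar` is the optimal f-regularized value function: it is attained by some policy and
dominates (statewise) the regularized value of every policy. -/
def IsOptRegValue {S A : Type*} [Fintype S] [Fintype A] (P : S → A → S → ℝ) (r : S → A → ℝ)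
    (γ lam : ℝ) (f : ℝ → ℝ) (pref : S → A → ℝ) (Vstar : S → ℝ) : Prop :=
  (∃ πopt, IsPolicy πopt ∧ IsRegValue P r γ lam f pref πopt Vstar) ∧
  (∀ π V, IsPolicy π → IsRegValue P r γ lam f pref π V → ∀ s, V s ≤ Vstar s)

/-- Discounted state-occupancy measure `d^π_ρ(s) = (1-γ) ∑_t γ^t (ρᵀ P_π^t)(s)`. -/
def dOcc {S A : Type*} [Fintype S] [Fintype A] (P : S → A → S → ℝ) (γ : ℝ)
    (ρ : S → ℝ) (π : S → A → ℝ) (s : S) : ℝ :=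
  (1 - γ) * ∑' t : ℕ,
    γ ^ t * ((fun (m : S → ℝ) (s' : S) => ∑ u, m u * ∑ a, π u a * P u a s')^[t] ρ) s

/-- `S_θ(s)` from the paper, written for a policy `π`. -/
def Sval {S A : Type*} [Fintype A] (f : ℝ → ℝ) (pref : S → A → ℝ) (π : S → A → ℝ)
    (s : S) : ℝ :=
  ∑ a, pref s a / deriv (deriv f) (π s a / pref s a)

/-- The normalized weights `W_θ(a|s)` from the paper, written for a policy `π`. -/
def Wval {S A : Type*} [Fintype A] (f : ℝ → ℝ) (pref : S → A → ℝ) (π : S → A → ℝ)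
    (s : S) (a : A) : ℝ :=
  (pref s a / deriv (deriv f) (π s a / pref s a)) / Sval f pref π s

/-- The regularized Q-function `Q(s,a) = r(s,a) + γ ∑_{s'} P(s'|s,a) V(s')`. -/
def Qval {S A : Type*} [Fintype S] [Fintype A] (P : S → A → S → ℝ) (r : S → A → ℝ)
    (γ : ℝ) (V : S → ℝ) (s : S) (a : A) : ℝ :=
  r s a + γ * ∑ s', P s a s' * V s'

section AuxStmt9

lemma prob_le_one {A : Type*} [Fintype A] {p : A → ℝ} (hp : IsProbDist p) (a : A) : p a ≤ 1 := by
  rw [← hp.2]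
  exact Finset.single_le_sum (fun i _ => hp.1 i) (Finset.mem_univ a)
lemma prob_exists_pos {A : Type*} [Fintype A] [Nonempty A] {p : A → ℝ} (hp : IsProbDist p) :
    ∃ b, 0 < p b := by
  by_contra h
  push_neg at h
  have : ∑ a, p a ≤ 0 := Finset.sum_nonpos fun a _ => h a
  rw [hp.2] at this; linarith
lemma ratio_mem {ρb : ℝ} (hρb : 0 < ρb) {qa pa : ℝ} (hqa : ρb < qa) (h0 : 0 ≤ pa)
    (h1 : pa ≤ 1) : pa / qa ∈ Set.Icc (0:ℝ) (1/ρb) ∧ pa / qa < 1/ρb := by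
  have hq0 : 0 < qa := hρb.trans hqa
  have h2 : pa / qa < 1 / ρb := by
    have : pa / qa ≤ 1 / qa := by gcongr
    exact lt_of_le_of_lt this (by gcongr)
  exact ⟨⟨div_nonneg h0 hq0.le, h2.le⟩, h2⟩

variable {A : Type*} [Fintype A] [Nonempty A] {f : ℝ → ℝ} {ρb : ℝ}

set_option maxHeartbeats 1000000 in
/-- Full support of the softargmax. -/
lemma softargmax_pos (hρb : 0 < ρb)
    (hconv : StrictConvexOn ℝ (Set.Icc (0:ℝ) (1/ρb)) f)
    (hdiff : ∀ u ∈ Set.Ioo (0:ℝ) (1/ρb), DifferentiableAt ℝ f u)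
    (htend : Tendsto (deriv f) (nhdsWithin 0 (Set.Ioi 0)) atBot)
    {q y p : A → ℝ} (hq : IsProbDist q) (hqb : ∀ a, ρb < q a)
    (hp : IsSoftargmax f q y p) (a : A) : 0 < p a := by
  classical
  rcases (hp.1.1 a).lt_or_eq with h | h
  · exact h
  exfalso
  have hpa : p a = 0 := h.symm
  obtain ⟨b, hb⟩ := prob_exists_pos hp.1
  have hab : a ≠ b := fun hh => by rw [hh] at hpa; exact hb.ne' hpa
  have hqa0 : 0 < q a := hρb.trans (hqb a)
  have hqb0 : 0 < q b := hρb.trans (hqb b)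
  have hρb1 : ρb < 1 := lt_of_lt_of_le (hqb b) (prob_le_one hq b)
  have hinv1 : 1 < 1/ρb := by rw [lt_div_iff₀ hρb]; linarith
  set u : ℝ := p b / q b with hu
  have hu0 : 0 < u := div_pos hb hqb0
  have humem := ratio_mem hρb (hqb b) hb.le (prob_le_one hp.1 b)
  -- constant from the b-side
  set C2 : ℝ := (2 / u) * (f (u/2) - f u) with hC2
  set c0 : ℝ := (y a - y b) - C2 - 1 with hc0
  have hev : ∀ᶠ w in nhdsWithin (0:ℝ) (Set.Ioi 0), deriv f w < c0 :=
    htend.eventually (eventually_lt_atBot c0)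
  rw [eventually_iff, mem_nhdsGT_iff_exists_Ioo_subset] at hev
  obtain ⟨w0, hw0, hsub⟩ := hev
  set ε : ℝ := min (min (p b / 2) (q a * w0 / 4)) (q a / 4) with hε
  have hε0 : 0 < ε := by
    have h1 : 0 < q a * w0 / 4 := by
      have : (0:ℝ) < w0 := hw0
      positivity
    exact lt_min (lt_min (by linarith) h1) (by positivity)
  have hεpb : ε ≤ p b / 2 := le_trans (min_le_left _ _) (min_le_left _ _)
  have hεw : ε ≤ q a * w0 / 4 := le_trans (min_le_left _ _) (min_le_right _ _)
  have hεq : ε ≤ q a / 4 := min_le_right _ _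
  set t : ℝ := ε / q a with ht
  have ht0 : 0 < t := div_pos hε0 hqa0
  have h2tw : 2 * t < w0 := by
    have hw : (0:ℝ) < w0 := hw0
    have ht4 : t ≤ w0 / 4 := by
      rw [ht, div_le_iff₀ hqa0]; nlinarith
    linarith
  have h2t0 : 0 < 2 * t := by linarith
  have h2thalf : 2 * t ≤ 1/2 := by
    have : t ≤ 1/4 := by
      rw [ht, div_le_iff₀ hqa0]; nlinarith
    linarith
  have h2tmem : 2 * t ∈ Set.Ioo (0:ℝ) (1/ρb) := ⟨h2t0, by linarith⟩
  have hder : deriv f (2 * t) < c0 := hsub ⟨h2t0, h2tw⟩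
  set m : A → ℝ := fun c => p c + (if c = a then ε else 0) - (if c = b then ε else 0) with hmdef
  have hm : IsProbDist m := by
    constructor
    · intro c
      by_cases h1 : c = a
      · subst h1
        simp [hmdef, hab, hpa]
        positivity
      · by_cases h2 : c = b
        · subst h2
          simp [hmdef, h1]
          linarith
        · simp [hmdef, h1, h2]
          exact hp.1.1 c
    · simp [hmdef, Finset.sum_add_distrib, Finset.sum_sub_distrib, Finset.sum_ite_eq',
        hp.1.2]
  have hsum1 : (∑ c, m c * y c) - ∑ c, p c * y c = ε * y a - ε * y b := by
    rw [← Finset.sum_sub_distrib]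
    have : ∀ c : A, m c * y c - p c * y c
        = (if c = a then ε * y a else 0) - (if c = b then ε * y b else 0) := by
      intro c
      by_cases h1 : c = a <;> by_cases h2 : c = b
      · exact absurd (h1 ▸ h2) hab
      · subst h1; simp [hmdef, hab]; try ring
      · subst h2; simp [hmdef, h1]; try ring
      · simp [hmdef, h1, h2]
    rw [Finset.sum_congr rfl fun c _ => this c, Finset.sum_sub_distrib]
    simp
  set u2 : ℝ := u / 2 with hu2
  have hdiv : fDiv f m q - fDiv f p q
      = q a * (f (ε / q a) - f 0) + q b * (f ((p b - ε)/q b) - f u) := by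
    unfold fDiv
    rw [← Finset.sum_sub_distrib]
    have : ∀ c : A, q c * f (m c / q c) - q c * f (p c / q c)
        = (if c = a then q a * (f (ε / q a) - f 0) else 0)
          + (if c = b then q b * (f ((p b - ε)/q b) - f u) else 0) := by
      intro c
      by_cases h1 : c = a <;> by_cases h2 : c = b
      · exact absurd (h1 ▸ h2) hab
      · subst h1; simp [hmdef, hab, hpa]; try ring
      · subst h2; simp [hmdef, h1, hu]; try ring
      · simp [hmdef, h1, h2]
    rw [Finset.sum_congr rfl fun c _ => this c, Finset.sum_add_distrib]
    simp
  -- bound 1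
  have hIccmem : ∀ z : ℝ, 0 ≤ z → z ≤ 1/ρb → z ∈ Set.Icc (0:ℝ) (1/ρb) := fun z h1 h2 => ⟨h1, h2⟩
  have hmem0 : (0:ℝ) ∈ Set.Icc (0:ℝ) (1/ρb) := ⟨le_refl _, by positivity⟩
  have hmem2t : 2 * t ∈ Set.Icc (0:ℝ) (1/ρb) := ⟨by linarith, by linarith⟩
  have s1 : (f t - f 0) / (t - 0) ≤ (f (2*t) - f t) / (2*t - t) :=
    hconv.convexOn.slope_mono_adjacent hmem0 hmem2t ht0 (by linarith)
  have s2 : slope f t (2*t) ≤ deriv f (2*t) :=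
    hconv.convexOn.slope_le_deriv ⟨ht0.le, by linarith⟩ hmem2t (by linarith) (hdiff _ h2tmem)
  rw [slope_def_field] at s2
  have T1 : q a * (f (ε / q a) - f 0) ≤ ε * deriv f (2*t) := by
    have e : q a * (f (ε / q a) - f 0) = ε * ((f t - f 0)/(t - 0)) := by
      rw [ht, sub_zero]
      field_simp
    rw [e]
    exact mul_le_mul_of_nonneg_left (le_trans s1 s2) hε0.le
  -- bound 2
  have humem2 : u2 ∈ Set.Icc (0:ℝ) (1/ρb) := ⟨by positivity, by
    have := humem.1.2; rw [hu2]; linarith⟩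
  set δ : ℝ := ε / q b with hδ
  have hδ0 : 0 < δ := div_pos hε0 hqb0
  have hδu : δ ≤ u / 2 := by
    rw [hδ, hu]
    calc ε / q b ≤ (p b / 2) / q b := by gcongr
      _ = (p b / q b) / 2 := by ring
  set θ : ℝ := 2 * δ / u with hθ
  have hθ0 : 0 ≤ θ := by positivity
  have hθ1 : θ ≤ 1 := by
    rw [hθ, div_le_one hu0]; linarith
  have hcvx := hconv.convexOn.2 humem.1 humem2 (by linarith : (0:ℝ) ≤ 1 - θ) hθ0 (by ring)
  have heq : (1 - θ) • u + θ • u2 = u - δ := by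
    rw [smul_eq_mul, smul_eq_mul, hu2, hθ]
    field_simp
    ring
  rw [heq, smul_eq_mul, smul_eq_mul] at hcvx
  have T2 : q b * (f ((p b - ε)/q b) - f u) ≤ ε * C2 := by
    have e2 : (p b - ε)/q b = u - δ := by rw [hu, hδ]; field_simp
    rw [e2]
    have : f (u - δ) - f u ≤ θ * (f u2 - f u) := by nlinarith [hcvx]
    have h3 : q b * (f (u - δ) - f u) ≤ q b * (θ * (f u2 - f u)) :=
      mul_le_mul_of_nonneg_left this hqb0.le
    refine h3.trans (le_of_eq ?_)
    rw [hC2, hθ, hδ, hu2]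
    field_simp
  -- contradiction
  have hle := hp.2.1 m hm
  have hgap : (∑ c, m c * y c) - fDiv f m q - ((∑ c, p c * y c) - fDiv f p q)
      = ε * y a - ε * y b - (q a * (f (ε / q a) - f 0) + q b * (f ((p b - ε)/q b) - f u)) := by
    linarith [hsum1, hdiv]
  have hmul : ε * deriv f (2*t) < ε * (y a - y b - C2 - 1) :=
    mul_lt_mul_of_pos_left (hc0 ▸ hder) hε0
  have hS : q a * (f (ε / q a) - f 0) + q b * (f ((p b - ε)/q b) - f u)
      < ε * y a - ε * y b := by
    calc q a * (f (ε / q a) - f 0) + q b * (f ((p b - ε)/q b) - f u)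
        ≤ ε * deriv f (2*t) + ε * C2 := add_le_add T1 T2
      _ < ε * (y a - y b - C2 - 1) + ε * C2 := by linarith
      _ = ε * y a - ε * y b - ε := by ring
      _ < ε * y a - ε * y b := by linarith
  linarith

/-- First-order optimality (variational inequality) for the softargmax. -/
lemma softargmax_vi (hρb : 0 < ρb)
    (hconv : StrictConvexOn ℝ (Set.Icc (0:ℝ) (1/ρb)) f)
    (hdiff : ∀ u ∈ Set.Ioo (0:ℝ) (1/ρb), DifferentiableAt ℝ f u)
    (htend : Tendsto (deriv f) (nhdsWithin 0 (Set.Ioi 0)) atBot)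
    {q y p : A → ℝ} (hq : IsProbDist q) (hqb : ∀ a, ρb < q a)
    (hp : IsSoftargmax f q y p) {m : A → ℝ} (hm : IsProbDist m) :
    ∑ a, (m a - p a) * (y a - deriv f (p a / q a)) ≤ 0 := by
  have hpos := softargmax_pos hρb hconv hdiff htend hq hqb hp
  have hq0 : ∀ a, 0 < q a := fun a => hρb.trans (hqb a)
  set g : ℝ → ℝ := fun s => (∑ a, (p a + s * (m a - p a)) * y a)
      - ∑ a, q a * f ((p a + s * (m a - p a)) / q a) with hg
  -- derivative of g at 0
  have hder : HasDerivAt g (∑ a, (m a - p a) * (y a - deriv f (p a / q a))) 0 := by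
    have h1 : HasDerivAt (fun s : ℝ => ∑ a, (p a + s * (m a - p a)) * y a)
        (∑ a, (m a - p a) * y a) 0 := by
      apply HasDerivAt.fun_sum
      intro a _
      simpa using (((hasDerivAt_id (0:ℝ)).mul_const (m a - p a)).const_add (p a)).mul_const (y a)
    have h2 : HasDerivAt (fun s : ℝ => ∑ a, q a * f ((p a + s * (m a - p a)) / q a))
        (∑ a, (m a - p a) * deriv f (p a / q a)) 0 := by
      apply HasDerivAt.fun_sum
      intro a _
      have hmem : p a / q a ∈ Set.Ioo (0:ℝ) (1/ρb) := by
        refine ⟨div_pos (hpos a) (hq0 a), ?_⟩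
        exact (ratio_mem hρb (hqb a) (hp.1.1 a) (prob_le_one hp.1 a)).2
      have hinner : HasDerivAt (fun s : ℝ => (p a + s * (m a - p a)) / q a)
          ((m a - p a) / q a) 0 := by
        simpa using ((((hasDerivAt_id (0:ℝ)).mul_const (m a - p a)).const_add (p a)).div_const
          (q a))
      have hat : (fun s : ℝ => (p a + s * (m a - p a)) / q a) 0 = p a / q a := by simp
      have hfd : HasDerivAt f (deriv f (p a / q a)) (p a / q a) :=
        (hdiff _ hmem).hasDerivAt
      have := (hat ▸ hfd).comp 0 hinner
      have := this.const_mul (q a)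
      refine this.congr_deriv ?_
      rw [hat]
      field_simp [(hq0 a).ne']
    have := h1.sub h2
    refine this.congr_deriv ?_
    rw [← Finset.sum_sub_distrib]
    apply Finset.sum_congr rfl
    intro a _
    ring
  -- g s ≤ g 0 for s ∈ (0, 1)
  have hle : ∀ s : ℝ, 0 < s → s < 1 → g s ≤ g 0 := by
    intro s hs0 hs1
    have hprob : IsProbDist (fun a => p a + s * (m a - p a)) := by
      constructor
      · intro a
        have h1 := hp.1.1 a
        have h2 := hm.1 a
        simp only
        nlinarith [mul_nonneg hs0.le h2, mul_nonneg (by linarith : (0:ℝ) ≤ 1 - s) h1]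
      · rw [Finset.sum_add_distrib, ← Finset.mul_sum, Finset.sum_sub_distrib, hp.1.2, hm.2]
        ring
    have := hp.2.1 _ hprob
    have hg0 : g 0 = (∑ a, p a * y a) - fDiv f p q := by
      simp [hg, fDiv]
    rw [hg0, hg]
    simpa [fDiv] using this
  -- conclude d ≤ 0
  have hT : Tendsto (slope g 0) (nhdsWithin 0 (Set.Ioi 0))
      (nhds (∑ a, (m a - p a) * (y a - deriv f (p a / q a)))) :=
    (hasDerivAt_iff_tendsto_slope.mp hder).mono_left
      (nhdsWithin_mono 0 (fun x hx => ne_of_gt hx))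
  refine le_of_tendsto hT ?_
  have h1 : Set.Ioo (0:ℝ) 1 ∈ nhdsWithin (0:ℝ) (Set.Ioi 0) := by
    rw [mem_nhdsGT_iff_exists_Ioo_subset]
    exact ⟨1, Set.mem_Ioi.mpr one_pos, subset_rfl⟩
  filter_upwards [h1] with s hs
  have := hle s hs.1 hs.2
  rw [slope_def_field, sub_zero]
  apply div_nonpos_of_nonpos_of_nonneg <;> linarith [hs.1]

/-- Strong monotonicity of `deriv f` composed with ratios. -/
lemma mono_coord {ωf : ℝ} (hρb : 0 < ρb)
    (hconv : StrictConvexOn ℝ (Set.Icc (0:ℝ) (1/ρb)) f)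
    (hdiff : ∀ u ∈ Set.Ioo (0:ℝ) (1/ρb),
      DifferentiableAt ℝ f u ∧ DifferentiableAt ℝ (deriv f) u)
    (hω1 : 1 ≤ ωf)
    (hbnd : ∀ u ∈ Set.Ioc (0:ℝ) (1/ρb), 1 / (u * deriv (deriv f) u) ≤ ωf)
    {qa c d : ℝ} (hqa : ρb < qa) (hc : 0 < c) (hc1 : c ≤ 1) (hd : 0 < d) (hd1 : d ≤ 1) :
    (d - c)^2 ≤ ωf * ((d - c) * (deriv f (d / qa) - deriv f (c / qa))) := by
  have hq0 : 0 < qa := hρb.trans hqa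
  have hconvIoo : StrictConvexOn ℝ (Set.Ioo (0:ℝ) (1/ρb)) f :=
    hconv.subset Set.Ioo_subset_Icc_self (convex_Ioo _ _)
  have hmono : StrictMonoOn (deriv f) (Set.Ioo (0:ℝ) (1/ρb)) :=
    hconvIoo.strictMonoOn_deriv (fun x hx => (hdiff x hx).1)
  have key : ∀ c' d' : ℝ, 0 < c' → d' ≤ 1 → c' < d' →
      (d' - c')^2 ≤ ωf * ((d' - c') * (deriv f (d' / qa) - deriv f (c' / qa))) := by
    intro c' d' hc' hd1' hcd
    set u : ℝ := c' / qa with hu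
    set v : ℝ := d' / qa with hv
    have hd' : 0 < d' := hc'.trans hcd
    have humem : u ∈ Set.Ioo (0:ℝ) (1/ρb) :=
      ⟨div_pos hc' hq0, (ratio_mem hρb hqa hc'.le (by linarith)).2⟩
    have hvmem : v ∈ Set.Ioo (0:ℝ) (1/ρb) :=
      ⟨div_pos hd' hq0, (ratio_mem hρb hqa hd'.le hd1').2⟩
    have huv : u < v := by rw [hu, hv]; gcongr
    -- MVT for deriv f on [u, v]
    have hcont : ContinuousOn (deriv f) (Set.Icc u v) := by
      intro w hw
      have hwmem : w ∈ Set.Ioo (0:ℝ) (1/ρb) :=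
        ⟨lt_of_lt_of_le humem.1 hw.1, lt_of_le_of_lt hw.2 hvmem.2⟩
      exact ((hdiff w hwmem).2).continuousAt.continuousWithinAt
    have hhd : ∀ w ∈ Set.Ioo u v, HasDerivAt (deriv f) (deriv (deriv f) w) w := by
      intro w hw
      have hwmem : w ∈ Set.Ioo (0:ℝ) (1/ρb) := ⟨humem.1.trans hw.1, hw.2.trans hvmem.2⟩
      exact ((hdiff w hwmem).2).hasDerivAt
    obtain ⟨ξ, hξ, hξeq⟩ := exists_hasDerivAt_eq_slope (deriv f) _ huv hcont hhd
    have hξmem : ξ ∈ Set.Ioo (0:ℝ) (1/ρb) := ⟨humem.1.trans hξ.1, hξ.2.trans hvmem.2⟩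
    have hfd : deriv f u < deriv f v := hmono humem hvmem huv
    have hF : 0 < deriv (deriv f) ξ := by
      rw [hξeq]
      apply div_pos (by linarith) (by linarith [hξ.1, hξ.2])
    have hξpos : (0:ℝ) < ξ := humem.1.trans hξ.1
    have hb := hbnd ξ ⟨hξmem.1, hξmem.2.le⟩
    have hb' : 1 ≤ ωf * (ξ * deriv (deriv f) ξ) := by
      rw [div_le_iff₀ (mul_pos hξpos hF)] at hb
      linarith
    -- deriv f v - deriv f u = F * (v - u)
    have hdiffeq : deriv f v - deriv f u = deriv (deriv f) ξ * (v - u) := by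
      rw [hξeq, div_mul_eq_mul_div, mul_div_assoc, div_self (by linarith : v - u ≠ 0), mul_one]
    have hξv : ξ ≤ d' / qa := hξ.2.le
    have hvu : v - u = (d' - c') / qa := by rw [hu, hv]; ring
    rw [hdiffeq, hvu]
    have hq1 : qa ≤ ωf * deriv (deriv f) ξ := by
      have h2 : ξ * qa ≤ d' := by
        rw [← le_div_iff₀ hq0]; exact hξv
      have h3 : ξ * qa ≤ 1 := h2.trans hd1'
      have hωpos : (0:ℝ) < ωf := lt_of_lt_of_le one_pos hω1
      have hωF : (0:ℝ) ≤ ωf * deriv (deriv f) ξ := (mul_pos hωpos hF).le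
      nlinarith [mul_le_mul_of_nonneg_right h3 hωF, mul_le_mul_of_nonneg_left hb' hq0.le]
    have hdc : 0 < d' - c' := by linarith
    calc (d' - c')^2 = ((d' - c') * (d' - c') / qa) * qa := by
          rw [div_mul_cancel₀ _ hq0.ne']; ring
      _ ≤ ((d' - c') * (d' - c') / qa) * (ωf * deriv (deriv f) ξ) := by
          apply mul_le_mul_of_nonneg_left hq1 (by positivity)
      _ = ωf * ((d' - c') * (deriv (deriv f) ξ * ((d' - c') / qa))) := by ring
  rcases lt_trichotomy c d with h | h | h
  · exact key c d hc hd1 h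
  · subst h; simp
  · have := key d c hd hc1 h
    nlinarith [this]

/-- Key per-state gap bound. -/
lemma key_gap {ωf : ℝ} (hρb : 0 < ρb)
    (hconv : StrictConvexOn ℝ (Set.Icc (0:ℝ) (1/ρb)) f)
    (hdiff : ∀ u ∈ Set.Ioo (0:ℝ) (1/ρb),
      DifferentiableAt ℝ f u ∧ DifferentiableAt ℝ (deriv f) u)
    (htend : Tendsto (deriv f) (nhdsWithin 0 (Set.Ioi 0)) atBot)
    (hω1 : 1 ≤ ωf)
    (hbnd : ∀ u ∈ Set.Ioc (0:ℝ) (1/ρb), 1 / (u * deriv (deriv f) u) ≤ ωf)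
    {q x y p p' : A → ℝ} (hq : IsProbDist q) (hqb : ∀ a, ρb < q a)
    (hp : IsSoftargmax f q y p) (hp' : IsSoftargmax f q x p')
    {m : A → ℝ} (hm : IsProbDist m) (K : ℝ) :
    ((∑ a, m a * x a) - fDiv f m q) - ((∑ a, p a * x a) - fDiv f p q)
      ≤ ωf * ∑ a, (x a - y a - K)^2 := by
  have hdiff1 : ∀ u ∈ Set.Ioo (0:ℝ) (1/ρb), DifferentiableAt ℝ f u :=
    fun u hu => (hdiff u hu).1
  set ζ : A → ℝ := fun a => x a - y a - K with hζ
  -- step 1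
  have step1 : ((∑ a, m a * x a) - fDiv f m q) - ((∑ a, p a * x a) - fDiv f p q)
      ≤ ∑ a, (p' a - p a) * ζ a := by
    have h1 := hp'.2.1 m hm
    have h2 := hp.2.1 p' hp'.1
    have e : ∑ a, (p' a - p a) * ζ a
        = ((∑ a, p' a * x a) - ∑ a, p a * x a) + ((∑ a, p a * y a) - ∑ a, p' a * y a)
          - K * ((∑ a, p' a) - ∑ a, p a) := by
      rw [← Finset.sum_sub_distrib, ← Finset.sum_sub_distrib, ← Finset.sum_sub_distrib,
        Finset.mul_sum, ← Finset.sum_add_distrib, ← Finset.sum_sub_distrib]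
      apply Finset.sum_congr rfl
      intro a _
      simp only [hζ]
      ring
    rw [e, hp.1.2, hp'.1.2]
    linarith
  -- step 2 : monotonicity from the two variational inequalities
  have vi1 := softargmax_vi hρb hconv hdiff1 htend hq hqb hp hp'.1
  have vi2 := softargmax_vi hρb hconv hdiff1 htend hq hqb hp' hp.1
  have step2 : ∑ a, (p' a - p a) * (deriv f (p' a / q a) - deriv f (p a / q a))
      ≤ ∑ a, (p' a - p a) * ζ a := by
    have e : ∑ a, (p' a - p a) * ζ a
        = (∑ a, (p' a - p a) * (deriv f (p' a / q a) - deriv f (p a / q a)))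
          + (- ∑ a, (p a - p' a) * (x a - deriv f (p' a / q a)))
          + (- ∑ a, (p' a - p a) * (y a - deriv f (p a / q a)))
          - K * ((∑ a, p' a) - ∑ a, p a) := by
      rw [← Finset.sum_neg_distrib, ← Finset.sum_neg_distrib, ← Finset.sum_sub_distrib,
        Finset.mul_sum, ← Finset.sum_add_distrib, ← Finset.sum_add_distrib,
        ← Finset.sum_sub_distrib]
      apply Finset.sum_congr rfl
      intro a _
      simp only [hζ]
      ring
    rw [e, hp.1.2, hp'.1.2]
    linarith
  -- step 3 : strong monotonicity coordinatewise
  have step3 : ∑ a, (p' a - p a)^2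
      ≤ ωf * ∑ a, (p' a - p a) * (deriv f (p' a / q a) - deriv f (p a / q a)) := by
    rw [Finset.mul_sum]
    apply Finset.sum_le_sum
    intro a _
    exact mono_coord hρb hconv hdiff hω1 hbnd (hqb a)
      (softargmax_pos hρb hconv hdiff1 htend hq hqb hp a) (prob_le_one hp.1 a)
      (softargmax_pos hρb hconv hdiff1 htend hq hqb hp' a) (prob_le_one hp'.1 a)
  -- step 4 : Cauchy-Schwarz and combination
  have hCS : (∑ a, (p' a - p a) * ζ a)^2 ≤ (∑ a, (p' a - p a)^2) * ∑ a, ζ a ^2 :=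
    Finset.sum_mul_sq_le_sq_mul_sq _ _ _
  have hωpos : 0 < ωf := lt_of_lt_of_le one_pos hω1
  have hZ : 0 ≤ ∑ a, ζ a ^ 2 := Finset.sum_nonneg fun a _ => sq_nonneg _
  set T : ℝ := ∑ a, (p' a - p a) * ζ a with hT
  have hfinal : T ≤ ωf * ∑ a, ζ a ^ 2 := by
    rcases le_or_gt T 0 with h | h
    · exact h.trans (by positivity)
    · have hN : ∑ a, (p' a - p a)^2 ≤ ωf * T := step3.trans (by nlinarith [step2])
      nlinarith [hCS, hN, hZ, h]
  calc ((∑ a, m a * x a) - fDiv f m q) - ((∑ a, p a * x a) - fDiv f p q) ≤ T := step1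
    _ ≤ ωf * ∑ a, ζ a ^ 2 := hfinal

end AuxStmt9

theorem stmt9 {S A : Type*} [Fintype S] [Fintype A] [Nonempty S] [Nonempty A]
    (ρb ωf κf ιf : ℝ) (hρb : 0 < ρb)
    (f : ℝ → ℝ) (hAF : AF f ρb ωf κf ιf)
    (γ : ℝ) (hγ : γ ∈ Set.Ioo (0:ℝ) 1)
    (P : S → A → S → ℝ) (hP : ∀ s a, IsProbDist (P s a))
    (r : S → A → ℝ) (hr : ∀ s a, r s a ∈ Set.Icc (0:ℝ) 1)
    (ρ : S → ℝ) (hρ : IsProbDist ρ)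
    (pref : S → A → ℝ) (hpref : IsPolicy pref) (hprefb : ∀ s a, ρb < pref s a)
    (lam : ℝ) (hlam : 0 < lam)
    (sfa : ((S × A) → ℝ) → S → A → ℝ)
    (hsfa : ∀ θ s, IsSoftargmax f (pref s) (fun a => θ (s, a)) (sfa θ s))
    (Vof : ((S × A) → ℝ) → S → ℝ)
    (hV : ∀ θ, IsRegValue P r γ lam f pref (sfa θ) (Vof θ))
    (Vstar : S → ℝ) (hVstar : IsOptRegValue P r γ lam f pref Vstar) :
    ∀ θ : (S × A) → ℝ,
      (∑ s, ρ s * Vstar s) - (∑ s, ρ s * Vof θ s) ≤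
        lam * ωf / (1 - γ) *
          ∑ s, ∑ a,
            (Qval P r γ (Vof θ) s a / lam - θ (s, a) -
              (∑ b, (Qval P r γ (Vof θ) s b / lam - θ (s, b))) / (Fintype.card A : ℝ)) ^ 2 := by
  classical
  intro θ
  obtain ⟨hbdd, hconv, hf1, hdiff3, htend, hMf, hω1, hκ, hbnd, hι, hdec, hdom⟩ := hAF
  have hdiff : ∀ u ∈ Set.Ioo (0:ℝ) (1/ρb),
      DifferentiableAt ℝ f u ∧ DifferentiableAt ℝ (deriv f) u :=
    fun u hu => ⟨(hdiff3 u hu).1, (hdiff3 u hu).2.1⟩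
  have hbnd1 : ∀ u ∈ Set.Ioc (0:ℝ) (1/ρb), 1 / (u * deriv (deriv f) u) ≤ ωf :=
    fun u hu => (hbnd u hu).1
  set W : S → ℝ := Vof θ with hW
  set p : S → A → ℝ := sfa θ with hpdef
  set θ' : (S × A) → ℝ := fun sa => Qval P r γ W sa.1 sa.2 / lam with hθ'
  set Ks : S → ℝ := fun s => (∑ b, (Qval P r γ W s b / lam - θ (s, b))) / (Fintype.card A : ℝ)
    with hKs
  obtain ⟨πopt, hπopt, hVs⟩ := hVstar.1
  set Δ : S → ℝ := fun s => Vstar s - W s with hΔ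
  -- the per-state squared residual
  set E : S → ℝ := fun s => lam * (ωf * ∑ a, (Qval P r γ W s a / lam - θ (s, a) - Ks s)^2)
    with hE
  have hEnn : ∀ s, 0 ≤ E s := by
    intro s
    have h1 : (0:ℝ) ≤ ∑ a, (Qval P r γ W s a / lam - θ (s, a) - Ks s)^2 :=
      Finset.sum_nonneg fun a _ => sq_nonneg _
    have : (0:ℝ) < ωf := lt_of_lt_of_le one_pos hω1
    positivity
  -- per-state gap bound from key_gap
  have hgap : ∀ s, ((∑ a, πopt s a * (Qval P r γ W s a / lam)) - fDiv f (πopt s) (pref s))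
      - ((∑ a, p s a * (Qval P r γ W s a / lam)) - fDiv f (p s) (pref s))
      ≤ ωf * ∑ a, (Qval P r γ W s a / lam - θ (s, a) - Ks s)^2 := by
    intro s
    exact key_gap hρb hconv hdiff htend hω1 hbnd1 (hpref s) (hprefb s)
      (hsfa θ s) (hsfa θ' s) (hπopt s) (Ks s)
  -- Bellman rewrites
  have hlam : lam ≠ 0 := hlam.ne'
  have hterm : ∀ (π : S → A → ℝ) (s : S) (a : A),
      lam * (π s a * (Qval P r γ W s a / lam))
        = π s a * r s a + γ * (π s a * ∑ s', P s a s' * W s') := by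
    intro π s a
    simp only [Qval]
    field_simp
  have hlamexp : ∀ (π : S → A → ℝ) (s : S),
      lam * ((∑ a, π s a * (Qval P r γ W s a / lam)) - fDiv f (π s) (pref s))
        = (∑ a, π s a * r s a) - lam * fDiv f (π s) (pref s)
          + γ * ∑ a, π s a * ∑ s', P s a s' * W s' := by
    intro π s
    rw [mul_sub, Finset.mul_sum]
    rw [Finset.sum_congr rfl fun a _ => hterm π s a, Finset.sum_add_distrib,
      ← Finset.mul_sum]
    ring
  have hWs : ∀ s, W s = lam * ((∑ a, p s a * (Qval P r γ W s a / lam))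
      - fDiv f (p s) (pref s)) := by
    intro s
    rw [hlamexp p s]
    exact hV θ s
  have hVsS : ∀ s, Vstar s = lam * ((∑ a, πopt s a * (Qval P r γ W s a / lam))
      - fDiv f (πopt s) (pref s)) + γ * ∑ a, πopt s a * ∑ s', P s a s' * Δ s' := by
    intro s
    rw [hlamexp πopt s]
    have hb := hVs s
    have e : ∀ a : A, πopt s a * ∑ s', P s a s' * Δ s'
        = πopt s a * ∑ s', P s a s' * Vstar s' - πopt s a * ∑ s', P s a s' * W s' := by
      intro a
      rw [← mul_sub, ← Finset.sum_sub_distrib]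
      congr 1
      apply Finset.sum_congr rfl
      intro s' _
      simp only [hΔ]
      ring
    rw [Finset.sum_congr rfl fun a _ => e a, Finset.sum_sub_distrib]
    rw [hb]
    ring
  -- the maximum of Δ
  obtain ⟨s0, _, hs0⟩ := Finset.exists_max_image (Finset.univ : Finset S) Δ univ_nonempty
  set M : ℝ := Δ s0 with hM
  have hΔM : ∀ s, Δ s ≤ M := fun s => hs0 s (Finset.mem_univ s)
  have hR : ∀ s, ∑ a, πopt s a * ∑ s', P s a s' * Δ s' ≤ M := by
    intro s
    have hinner : ∀ a, ∑ s', P s a s' * Δ s' ≤ M := by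
      intro a
      calc ∑ s', P s a s' * Δ s' ≤ ∑ s', P s a s' * M :=
            Finset.sum_le_sum fun s' _ => mul_le_mul_of_nonneg_left (hΔM s') ((hP s a).1 s')
        _ = M := by rw [← Finset.sum_mul, (hP s a).2, one_mul]
    calc ∑ a, πopt s a * ∑ s', P s a s' * Δ s' ≤ ∑ a, πopt s a * M :=
          Finset.sum_le_sum fun a _ => mul_le_mul_of_nonneg_left (hinner a) ((hπopt s).1 a)
      _ = M := by rw [← Finset.sum_mul, (hπopt s).2, one_mul]
  have hstate : ∀ s, Δ s ≤ E s + γ * M := by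
    intro s
    have h1 : Δ s = lam * (((∑ a, πopt s a * (Qval P r γ W s a / lam))
        - fDiv f (πopt s) (pref s)) - ((∑ a, p s a * (Qval P r γ W s a / lam))
        - fDiv f (p s) (pref s))) + γ * ∑ a, πopt s a * ∑ s', P s a s' * Δ s' := by
      simp only [hΔ]
      rw [hVsS s, hWs s]
      ring
    rw [h1, hE]
    have h2 := mul_le_mul_of_nonneg_left (hgap s) (le_of_lt (by linarith [hlam] : (0:ℝ) < lam))
    have h3 := mul_le_mul_of_nonneg_left (hR s) (le_of_lt hγ.1)
    exact add_le_add h2 h3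
  have hMbound : (1 - γ) * M ≤ ∑ s, E s := by
    have h1 : M ≤ E s0 + γ * M := hstate s0
    have h2 : E s0 ≤ ∑ s, E s :=
      Finset.single_le_sum (fun s _ => hEnn s) (Finset.mem_univ s0)
    linarith
  have hγ1 : (0:ℝ) < 1 - γ := by linarith [hγ.2]
  have hfinal : (∑ s, ρ s * Vstar s) - (∑ s, ρ s * Vof θ s) ≤ (∑ s, E s) / (1 - γ) := by
    have e1 : (∑ s, ρ s * Vstar s) - (∑ s, ρ s * Vof θ s) = ∑ s, ρ s * Δ s := by
      rw [← Finset.sum_sub_distrib]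
      apply Finset.sum_congr rfl
      intro s _
      simp only [hΔ, hW]
      ring
    have e2 : ∑ s, ρ s * Δ s ≤ M := by
      calc ∑ s, ρ s * Δ s ≤ ∑ s, ρ s * M :=
            Finset.sum_le_sum fun s _ => mul_le_mul_of_nonneg_left (hΔM s) (hρ.1 s)
        _ = M := by rw [← Finset.sum_mul, hρ.2, one_mul]
    rw [e1]
    refine e2.trans ?_
    rw [le_div_iff₀ hγ1]
    linarith [hMbound]
  refine hfinal.trans (le_of_eq ?_)
  have e3 : ∑ s, E s
      = lam * ωf * ∑ s, ∑ a, (Qval P r γ W s a / lam - θ (s, a) - Ks s)^2 := by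
    rw [Finset.mul_sum]
    apply Finset.sum_congr rfl
    intro s _
    simp only [hE]
    ring
  rw [e3]
  simp only [hKs]
  ring

end
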